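/- For every polynomial p with complex coefficients there exist a unique complex number c and a unique polynomial q with complex coefficients such that p = c + q′ − X·q; moreover c = E(p), the Gaussian expectation of p. In particular, the quotient of C[X] by the image of the linear map q ↦ q′ − X·q is one-dimensional, spanned by the class of the constant polynomial 1. -/

import Mathlib

open Polynomial MeasureTheory

noncomputable def gaussianExpectation (p : Polynomial ℂ) : ℂ :=
  (∫ x : ℝ, p.eval (x : ℂ) * Real.exp (-x ^ 2 / 2)) /
    (∫ x : ℝ, (Real.exp (-x ^ 2 / 2) : ℂ))

noncomputable def gaussianDifferential : Polynomial ℂ →ₗ[ℂ] Polynomial ℂ :=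
  derivative - LinearMap.mulLeft ℂ (X : Polynomial ℂ)

lemma tq_coeff (q : Polynomial ℂ) :
    (derivative q - X * q).coeff (q.natDegree + 1) = -q.leadingCoeff := by
  rw [coeff_sub, coeff_derivative, coeff_X_mul,
    coeff_eq_zero_of_natDegree_lt (by omega : q.natDegree < q.natDegree + 1 + 1)]
  simp only [zero_mul, zero_sub, leadingCoeff]

lemma tq_ne_const (q : Polynomial ℂ) (hq : q ≠ 0) (d : ℂ) :
    derivative q - X * q ≠ C d := by
  intro h
  have h1 := tq_coeff q
  rw [h, coeff_C, if_neg (by omega)] at h1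
  exact leadingCoeff_ne_zero.mpr hq (by simpa using h1.symm)

lemma decomp_inj {c c' : ℂ} {q q' : Polynomial ℂ}
    (h : C c + (derivative q - X * q) = C c' + (derivative q' - X * q')) :
    c = c' ∧ q = q' := by
  by_cases hqq : q = q'
  · subst hqq
    refine ⟨C_injective (by linear_combination h), rfl⟩
  · exfalso
    apply tq_ne_const (q - q') (sub_ne_zero.mpr hqq) (c' - c)
    rw [derivative_sub, C_sub]
    linear_combination h

lemma exists_decomp (p : Polynomial ℂ) :
    ∃ c q, p = C c + (derivative q - X * q) := by
  suffices H : ∀ n (p : Polynomial ℂ), p.natDegree = n →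
      ∃ c q, p = C c + (derivative q - X * q) from H _ p rfl
  intro n
  induction n using Nat.strong_induction_on with
  | _ n ih =>
    intro p h
    match n, ih with
    | 0, _ =>
      obtain ⟨a, rfl⟩ := natDegree_eq_zero.mp h
      exact ⟨a, 0, by simp⟩
    | m + 1, ih =>
      set a := p.leadingCoeff with ha
      set r : Polynomial ℂ := p.eraseLead + derivative (C a * X ^ m) with hr
      have hrd : r.natDegree < m + 1 := by
        apply lt_of_le_of_lt (natDegree_add_le _ _)
        apply max_lt
        · have := p.eraseLead_natDegree_le
          omega
        · refine lt_of_le_of_lt (natDegree_derivative_le (C a * X ^ m)) ?_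
          have : (C a * X ^ m).natDegree ≤ m := natDegree_C_mul_le _ _ |>.trans (by simp)
          omega
      obtain ⟨c, q, hq⟩ := ih r.natDegree hrd r rfl
      refine ⟨c, q + (-C a * X ^ m), ?_⟩
      have hp : p = r + (derivative (-C a * X ^ m) - X * (-C a * X ^ m)) := by
        have he : p.eraseLead = p - C a * X ^ (m + 1) := by
          rw [ha, ← h, ← self_sub_C_mul_X_pow]
        rw [hr, he]
        ring_nf
        rw [derivative_neg]
        ring
      rw [hp, hq, derivative_add, mul_add]
      ring

lemma integrable_poly_gauss (p : Polynomial ℂ) :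
    Integrable fun x : ℝ => p.eval (x : ℂ) * (Real.exp (-x ^ 2 / 2) : ℂ) := by
  induction p using Polynomial.induction_on' with
  | add p q hp hq => simpa [add_mul, Pi.add_def] using hp.add hq
  | monomial n a =>
    have h0 : Integrable fun x : ℝ => x ^ (n : ℝ) * Real.exp (-(1/2 : ℝ) * x ^ 2) :=
      integrable_rpow_mul_exp_neg_mul_sq (by norm_num)
        (lt_of_lt_of_le neg_one_lt_zero (Nat.cast_nonneg n))
    have h : Integrable fun x : ℝ => x ^ n * Real.exp (-x ^ 2 / 2) := by
      refine h0.congr (Filter.Eventually.of_forall fun x => ?_)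
      simp only [Real.rpow_natCast]
      ring_nf
    refine ((h.ofReal (𝕜 := ℂ)).const_mul a).congr
      (Filter.Eventually.of_forall fun x => ?_)
    push_cast
    simp [eval_monomial]
    ring

lemma hasDerivAt_gauss (q : Polynomial ℂ) (x : ℝ) :
    HasDerivAt (fun y : ℝ => q.eval (y : ℂ) * (Real.exp (-y ^ 2 / 2) : ℂ))
      ((derivative q - X * q).eval (x : ℂ) * (Real.exp (-x ^ 2 / 2) : ℂ)) x := by
  have hP : HasDerivAt (fun y : ℝ => q.eval (y : ℂ)) ((derivative q).eval (x : ℂ)) x :=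
    (q.hasDerivAt (x : ℂ)).comp_ofReal
  have hE0 : HasDerivAt (fun y : ℝ => Real.exp (-y ^ 2 / 2))
      (Real.exp (-x ^ 2 / 2) * (-(2 * x ^ 1) / 2)) x :=
    (((hasDerivAt_pow 2 x).neg).div_const 2).exp
  have hE : HasDerivAt (fun y : ℝ => (Real.exp (-y ^ 2 / 2) : ℂ))
      ((Real.exp (-x ^ 2 / 2) * (-(2 * x ^ 1) / 2) : ℝ) : ℂ) x := hE0.ofReal_comp
  have : HasDerivAt (fun y : ℝ => q.eval (y : ℂ) * (Real.exp (-y ^ 2 / 2) : ℂ)) _ x := hP.mul hE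
  convert this using 1
  push_cast
  simp only [eval_sub, eval_mul, eval_X]
  ring

lemma integral_T_eq_zero (q : Polynomial ℂ) :
    ∫ x : ℝ, (derivative q - X * q).eval (x : ℂ) * (Real.exp (-x ^ 2 / 2) : ℂ) = 0 :=
  integral_eq_zero_of_hasDerivAt_of_integrable (hasDerivAt_gauss q)
    (integrable_poly_gauss _) (integrable_poly_gauss q)

lemma gauss_denom_pos : 0 < ∫ x : ℝ, Real.exp (-x ^ 2 / 2) := by
  have h : (∫ x : ℝ, Real.exp (-x ^ 2 / 2)) = ∫ x : ℝ, Real.exp (-(1/2 : ℝ) * x ^ 2) := by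
    congr 1; funext x; ring_nf
  rw [h, integral_gaussian]
  positivity

lemma gauss_denom_ne_zero : (∫ x : ℝ, (Real.exp (-x ^ 2 / 2) : ℂ)) ≠ 0 := by
  rw [show (∫ x : ℝ, (Real.exp (-x ^ 2 / 2) : ℂ)) =
      ((∫ x : ℝ, Real.exp (-x ^ 2 / 2) : ℝ) : ℂ) from integral_ofReal]
  exact_mod_cast gauss_denom_pos.ne'

lemma expectation_eq (c : ℂ) (q : Polynomial ℂ) :
    gaussianExpectation (C c + (derivative q - X * q)) = c := by
  unfold gaussianExpectation
  have hnum : (∫ x : ℝ, (C c + (derivative q - X * q)).eval (x : ℂ) *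
      (Real.exp (-x ^ 2 / 2) : ℂ)) = c * ∫ x : ℝ, (Real.exp (-x ^ 2 / 2) : ℂ) := by
    have h1 : (fun x : ℝ => (C c + (derivative q - X * q)).eval (x : ℂ) *
        (Real.exp (-x ^ 2 / 2) : ℂ)) =
        fun x : ℝ => (C c).eval (x : ℂ) * (Real.exp (-x ^ 2 / 2) : ℂ) +
          (derivative q - X * q).eval (x : ℂ) * (Real.exp (-x ^ 2 / 2) : ℂ) := by
      funext x; rw [eval_add]; ring
    rw [h1, integral_add (integrable_poly_gauss (C c)) (integrable_poly_gauss _),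
      integral_T_eq_zero, add_zero]
    simp only [eval_C]
    rw [integral_const_mul]
  rw [hnum, mul_div_assoc, div_self gauss_denom_ne_zero, mul_one]

lemma gd_apply (q : Polynomial ℂ) :
    gaussianDifferential q = derivative q - X * q := rfl

lemma mkQ_one_ne_zero :
    (LinearMap.range gaussianDifferential).mkQ (1 : Polynomial ℂ) ≠ 0 := by
  rw [Ne, Submodule.mkQ_apply, Submodule.Quotient.mk_eq_zero]
  rintro ⟨q, hq⟩
  rw [gd_apply] at hq
  rcases eq_or_ne q 0 with rfl | hq0
  · simp at hq
  · exact tq_ne_const q hq0 1 (by simpa using hq)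

lemma mkQ_spans (w : Polynomial ℂ ⧸ LinearMap.range gaussianDifferential) :
    ∃ c : ℂ, c • (LinearMap.range gaussianDifferential).mkQ (1 : Polynomial ℂ) = w := by
  obtain ⟨p, rfl⟩ := Submodule.mkQ_surjective _ w
  obtain ⟨c, q, hp⟩ := exists_decomp p
  refine ⟨c, ?_⟩
  rw [← _root_.map_smul, hp]
  rw [show c • (1 : Polynomial ℂ) = C c by simp [Algebra.smul_def]]
  symm
  rw [Submodule.mkQ_apply, Submodule.mkQ_apply, Submodule.Quotient.eq]
  exact ⟨q, by rw [gd_apply]; ring⟩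

theorem gaussian_homology_decomposition :
    (∀ p : Polynomial ℂ,
      ∃! cq : ℂ × Polynomial ℂ,
        p = C cq.1 + (derivative cq.2 - X * cq.2)) ∧
    (∀ (p : Polynomial ℂ) (c : ℂ) (q : Polynomial ℂ),
      p = C c + (derivative q - X * q) → c = gaussianExpectation p) ∧
    Module.finrank ℂ (Polynomial ℂ ⧸ LinearMap.range gaussianDifferential) = 1 ∧
    Submodule.span ℂ
        {(LinearMap.range gaussianDifferential).mkQ (1 : Polynomial ℂ)} = ⊤ := by
  refine ⟨?_, ?_, ?_, ?_⟩
  · intro p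
    obtain ⟨c, q, hp⟩ := exists_decomp p
    refine ⟨(c, q), hp, ?_⟩
    rintro ⟨c', q'⟩ h'
    have := decomp_inj (h'.symm.trans hp)
    exact Prod.ext this.1 this.2
  · intro p c q hp
    rw [hp, expectation_eq]
  · exact finrank_eq_one _ mkQ_one_ne_zero mkQ_spans
  · rw [Submodule.eq_top_iff']
    intro w
    obtain ⟨c, hc⟩ := mkQ_spans w
    exact hc ▸ Submodule.smul_mem _ _ (Submodule.mem_span_singleton_self _)
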